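/- Let X be a finite set with |X| ≥ 2, let C be a weak patchwork for X, and let A ∈ C be a cluster with |Max(C:A)| ≥ 2. Then exactly one of the following two assertions holds: [M1-A] every cluster in C contained in A is compatible with every member of Max(C:A) (in particular, distinct members of Max(C:A) are disjoint); or [M2-A] any two distinct clusters C, C' ∈ Max(C:A) satisfy C ∩ C' ≠ ∅ and C ∪ C' = A. Furthermore, if C is a saturated patchwork, then [M1-A] holds if and only if Max(C:A) ⊆ C*, in which case the cluster system ⟨Max(C:A)⟩ := {⋃M : ∅ ≠ M ⊊ Max(C:A)} is also contained in C*. -/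

import Mathlib

/-- Two subsets `A`, `B` are compatible if `A ∩ B ∈ {∅, A, B}`. -/
def Compatible {α : Type*} [DecidableEq α] (A B : Finset α) : Prop :=
  A ∩ B = ∅ ∨ A ∩ B = A ∨ A ∩ B = B

/-- A cluster system: a collection of non-empty subsets of `X`. -/
def IsCS {α : Type*} [DecidableEq α] (C : Set (Finset α)) : Prop :=
  ∀ A ∈ C, A.Nonempty

/-- The adjoint `C*`: all non-empty subsets of `X` compatible with every member of `C`. -/
def adjS {α : Type*} [DecidableEq α] (C : Set (Finset α)) : Set (Finset α) :=
  {A | A.Nonempty ∧ ∀ B ∈ C, Compatible A B}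

/-- A hierarchy: a cluster system whose members are pairwise compatible. -/
def IsHierarchyS {α : Type*} [DecidableEq α] (C : Set (Finset α)) : Prop :=
  IsCS C ∧ ∀ A ∈ C, ∀ B ∈ C, Compatible A B

/-- A maximal hierarchy: a hierarchy not properly contained in any other hierarchy. -/
def IsMaxHierarchyS {α : Type*} [DecidableEq α] (H : Set (Finset α)) : Prop :=
  IsHierarchyS H ∧ ∀ D : Set (Finset α), IsHierarchyS D → H ⊆ D → D = H

/-- A weak patchwork: incompatible members have their union in the system. -/
def IsWeakPW {α : Type*} [DecidableEq α] (C : Set (Finset α)) : Prop :=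
  ∀ A ∈ C, ∀ B ∈ C, ¬Compatible A B → A ∪ B ∈ C

/-- A patchwork: incompatible members have both intersection and union in the system. -/
def IsPW {α : Type*} [DecidableEq α] (C : Set (Finset α)) : Prop :=
  ∀ A ∈ C, ∀ B ∈ C, ¬Compatible A B → A ∩ B ∈ C ∧ A ∪ B ∈ C

/-- A saturated patchwork: for incompatible members `A`, `B`, the five sets
`A ∩ B`, `A ∪ B`, `A - B`, `B - A`, `(A ∪ B) - (A ∩ B)` lie in the system. -/
def IsSatPW {α : Type*} [DecidableEq α] (C : Set (Finset α)) : Prop :=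
  ∀ A ∈ C, ∀ B ∈ C, ¬Compatible A B →
    A ∩ B ∈ C ∧ A ∪ B ∈ C ∧ A \ B ∈ C ∧ B \ A ∈ C ∧ (A ∪ B) \ (A ∩ B) ∈ C

/-- The trivial cluster system: all singletons together with `X` itself. -/
def CtrivS (α : Type*) [Fintype α] [DecidableEq α] : Set (Finset α) :=
  {A | (∃ x : α, A = {x}) ∨ A = Finset.univ}

/-- `C` is ample: for every arc `(C₂, C₁)` of the Hasse diagram (i.e. `C₂ ⊊ C₁`
with nothing of `C` strictly between), `C₁ - C₂ ∈ C`. -/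
def IsAmpleS {α : Type*} [DecidableEq α] (C : Set (Finset α)) : Prop :=
  ∀ C₁ ∈ C, ∀ C₂ ∈ C, C₂ ⊂ C₁ → (∀ B ∈ C, ¬(C₂ ⊂ B ∧ B ⊂ C₁)) → C₁ \ C₂ ∈ C

/-- `Max(C:A)`: the maximal elements of `{B ∈ C : B ⊆ A} - {A}`. -/
def MaxBelowS {α : Type*} [DecidableEq α] (C : Set (Finset α)) (A : Finset α) :
    Set (Finset α) :=
  {B ∈ C | B ⊆ A ∧ B ≠ A ∧ ∀ B' ∈ C, B' ⊆ A → B' ≠ A → B ⊆ B' → B = B'}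

section Helpers
variable {α : Type*} [DecidableEq α]

lemma compat_symm {A B : Finset α} (h : Compatible A B) : Compatible B A := by
  unfold Compatible at *
  rw [Finset.inter_comm] at h
  tauto

lemma max_mem {C : Set (Finset α)} {A N : Finset α} (h : N ∈ MaxBelowS C A) :
    N ∈ C ∧ N ⊆ A ∧ N ≠ A ∧ ∀ B' ∈ C, B' ⊆ A → B' ≠ A → N ⊆ B' → N = B' := h

lemma exists_max_aux (C : Set (Finset α)) (A : Finset α) :
    ∀ k, ∀ B, B ∈ C → B ⊆ A → B ≠ A → A.card - B.card ≤ k →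
      ∃ N ∈ MaxBelowS C A, B ⊆ N := by
  intro k
  induction k with
  | zero =>
    intro B hB hBA hne hk
    have h1 : B ⊂ A := HasSubset.Subset.ssubset_of_ne hBA hne
    have h2 := Finset.card_lt_card h1
    omega
  | succ k ih =>
    intro B hB hBA hne hk
    by_cases hmax : ∀ B' ∈ C, B' ⊆ A → B' ≠ A → B ⊆ B' → B = B'
    · exact ⟨B, ⟨hB, hBA, hne, hmax⟩, subset_rfl⟩
    · push_neg at hmax
      obtain ⟨B', hB', hB'A, hB'ne, hBB', hne'⟩ := hmax
      have hlt : B ⊂ B' := HasSubset.Subset.ssubset_of_ne hBB' hne'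
      have h1 := Finset.card_lt_card hlt
      have h2 := Finset.card_le_card hB'A
      obtain ⟨N, hN, hsub⟩ := ih B' hB' hB'A hB'ne (by omega)
      exact ⟨N, hN, hBB'.trans hsub⟩

lemma exists_max {C : Set (Finset α)} {A B : Finset α}
    (hB : B ∈ C) (hBA : B ⊆ A) (hne : B ≠ A) :
    ∃ N ∈ MaxBelowS C A, B ⊆ N :=
  exists_max_aux C A A.card B hB hBA hne (Nat.sub_le _ _)

lemma max_compat_disjoint {C : Set (Finset α)} {A N N' : Finset α}
    (hN : N ∈ MaxBelowS C A) (hN' : N' ∈ MaxBelowS C A) (hne : N ≠ N')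
    (h : Compatible N N') : N ∩ N' = ∅ := by
  rcases h with h | h | h
  · exact h
  · exact absurd (hN.2.2.2 N' hN'.1 hN'.2.1 hN'.2.2.1 (Finset.inter_eq_left.mp h)) hne
  · exact absurd (hN'.2.2.2 N hN.1 hN.2.1 hN.2.2.1 (Finset.inter_eq_right.mp h)).symm hne

lemma max_incompat_union {C : Set (Finset α)} (hW : IsWeakPW C) {A N N' : Finset α}
    (hN : N ∈ MaxBelowS C A) (hN' : N' ∈ MaxBelowS C A)
    (h : ¬Compatible N N') : N ∪ N' = A := by
  have hmem : N ∪ N' ∈ C := hW N hN.1 N' hN'.1 h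
  have hsub : N ∪ N' ⊆ A := Finset.union_subset hN.2.1 hN'.2.1
  by_contra hne
  have h1 : N = N ∪ N' := hN.2.2.2 _ hmem hsub hne Finset.subset_union_left
  have h2 : N' ⊆ N := by rw [h1]; exact Finset.subset_union_right
  exact h (Or.inr (Or.inr (Finset.inter_eq_right.mpr h2)))

end Helpers
section More
variable {α : Type*} [DecidableEq α]

/-- If some pair of maximal clusters is incompatible, M2 holds. -/
lemma M2_of_incompat {C : Set (Finset α)} (hC : IsCS C) (hW : IsWeakPW C)
    {A M₁ M₂ : Finset α} (hM₁ : M₁ ∈ MaxBelowS C A) (hM₂ : M₂ ∈ MaxBelowS C A)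
    (hinc : ¬Compatible M₁ M₂) :
    ∀ N ∈ MaxBelowS C A, ∀ N' ∈ MaxBelowS C A, N ≠ N' → N ∩ N' ≠ ∅ ∧ N ∪ N' = A := by
  have hunion : M₁ ∪ M₂ = A := max_incompat_union hW hM₁ hM₂ hinc
  have hAM₁ : (A \ M₁).Nonempty := by
    obtain ⟨x, hxA, hxM⟩ := Finset.exists_of_ssubset
      (HasSubset.Subset.ssubset_of_ne hM₁.2.1 hM₁.2.2.1)
    exact ⟨x, Finset.mem_sdiff.mpr ⟨hxA, hxM⟩⟩
  have claim2 : ∀ P ∈ MaxBelowS C A, P ≠ M₁ → Compatible P M₁ → P = M₂ := by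
    intro P hP hPne hPc
    have hd := max_compat_disjoint hP hM₁ hPne hPc
    have hsub : P ⊆ M₂ := by
      intro x hx
      have hxA : x ∈ A := hP.2.1 hx
      have hxn : x ∉ M₁ := by
        intro hxm
        have : x ∈ P ∩ M₁ := Finset.mem_inter.mpr ⟨hx, hxm⟩
        rw [hd] at this
        exact absurd this (Finset.notMem_empty x)
      rw [← hunion] at hxA
      rcases Finset.mem_union.mp hxA with h | h
      · exact absurd h hxn
      · exact h
    exact hP.2.2.2 M₂ hM₂.1 hM₂.2.1 hM₂.2.2.1 hsub
  have key : ∀ P ∈ MaxBelowS C A, P ≠ M₁ → A \ M₁ ⊆ P := by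
    intro P hP hPne
    by_cases hc : Compatible P M₁
    · rw [claim2 P hP hPne hc]
      intro x hx
      obtain ⟨hxA, hxn⟩ := Finset.mem_sdiff.mp hx
      rw [← hunion] at hxA
      rcases Finset.mem_union.mp hxA with h | h
      · exact absurd h hxn
      · exact h
    · have hu : P ∪ M₁ = A := max_incompat_union hW hP hM₁ hc
      intro x hx
      obtain ⟨hxA, hxn⟩ := Finset.mem_sdiff.mp hx
      rw [← hu] at hxA
      rcases Finset.mem_union.mp hxA with h | h
      · exact h
      · exact absurd h hxn
  intro N hN N' hN' hne
  have hNinc : ¬Compatible N N' := by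
    intro hcomp
    have hdisj := max_compat_disjoint hN hN' hne hcomp
    by_cases h1 : N = M₁
    · have hN'ne : N' ≠ M₁ := by rw [← h1]; exact hne.symm
      have hcN' : Compatible N' M₁ := by
        left
        rw [Finset.inter_comm, ← h1, hdisj]
      have := claim2 N' hN' hN'ne hcN'
      apply hinc
      left
      rw [← h1, ← this, hdisj]
    · by_cases h2 : N' = M₁
      · have hcN : Compatible N M₁ := by
          left
          rw [← h2, hdisj]
        have := claim2 N hN h1 hcN
        apply hinc
        left
        rw [← this, ← h2, Finset.inter_comm, hdisj]
      · obtain ⟨x, hx⟩ := hAM₁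
        have : x ∈ N ∩ N' := Finset.mem_inter.mpr ⟨key N hN h1 hx, key N' hN' h2 hx⟩
        rw [hdisj] at this
        exact absurd this (Finset.notMem_empty x)
  constructor
  · intro h
    exact hNinc (Or.inl h)
  · exact max_incompat_union hW hN hN' hNinc

/-- M1 implies Max ⊆ adjS, for saturated patchworks. -/
lemma M1_to_adj {C : Set (Finset α)} (hC : IsCS C) (hSat : IsSatPW C)
    {A : Finset α} (hA : A ∈ C)
    (hM1 : ∀ B ∈ C, B ⊆ A → ∀ M ∈ MaxBelowS C A, Compatible B M) :
    MaxBelowS C A ⊆ adjS C := by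
  intro M hM
  refine ⟨hC M hM.1, ?_⟩
  intro B hB
  have hMA := hM.2.1
  by_cases hBA : B ⊆ A
  · exact compat_symm (hM1 B hB hBA M hM)
  · by_contra hinc
    simp only [Compatible, not_or] at hinc
    obtain ⟨h1, h2, h3⟩ := hinc
    have hABinc : ¬Compatible A B := by
      rintro (h | h | h)
      · apply h1
        have hs : M ∩ B ⊆ A ∩ B := Finset.inter_subset_inter hMA subset_rfl
        rw [h] at hs
        exact Finset.subset_empty.mp hs
      · apply h2
        exact Finset.inter_eq_left.mpr (hMA.trans (Finset.inter_eq_left.mp h))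
      · exact hBA (Finset.inter_eq_right.mp h)
    obtain ⟨hIC, -, hDC, -, -⟩ := hSat A hA B hB hABinc
    have c1 := hM1 (A ∩ B) hIC Finset.inter_subset_left M hM
    have c2 := hM1 (A \ B) hDC (Finset.sdiff_subset) M hM
    have hIM : (A ∩ B) ∩ M = M ∩ B := by
      ext x
      simp only [Finset.mem_inter]
      constructor
      · rintro ⟨⟨-, hb⟩, hm⟩; exact ⟨hm, hb⟩
      · rintro ⟨hm, hb⟩; exact ⟨⟨hMA hm, hb⟩, hm⟩
    have hDM : (A \ B) ∩ M = M \ B := by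
      ext x
      simp only [Finset.mem_inter, Finset.mem_sdiff]
      constructor
      · rintro ⟨⟨-, hb⟩, hm⟩; exact ⟨hm, hb⟩
      · rintro ⟨hm, hb⟩; exact ⟨⟨hMA hm, hb⟩, hm⟩
    have hIsub : A ∩ B ⊆ M := by
      rcases c1 with h | h | h
      · rw [hIM] at h; exact absurd h h1
      · exact Finset.inter_eq_left.mp h
      · rw [hIM] at h
        exact absurd h h2
    have hDsub : A \ B ⊆ M := by
      rcases c2 with h | h | h
      · rw [hDM] at h
        apply absurd _ h2
        apply Finset.inter_eq_left.mpr
        intro x hx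
        by_contra hxb
        have : x ∈ M \ B := Finset.mem_sdiff.mpr ⟨hx, hxb⟩
        rw [h] at this
        exact absurd this (Finset.notMem_empty x)
      · exact Finset.inter_eq_left.mp h
      · rw [hDM] at h
        exfalso; apply h1
        apply Finset.eq_empty_iff_forall_notMem.mpr
        intro x hx
        obtain ⟨hxm, hxb⟩ := Finset.mem_inter.mp hx
        have hx' : x ∈ M \ B := by rw [h]; exact hxm
        exact (Finset.mem_sdiff.mp hx').2 hxb
    have hAM : A ⊆ M := by
      intro x hx
      by_cases hxb : x ∈ B
      · exact hIsub (Finset.mem_inter.mpr ⟨hx, hxb⟩)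
      · exact hDsub (Finset.mem_sdiff.mpr ⟨hx, hxb⟩)
    exact hM.2.2.1 (Finset.Subset.antisymm hMA hAM)

end More

/-- For a weak patchwork `C` and `A ∈ C` with `|Max(C:A)| ≥ 2`, exactly one of
[M1-A] and [M2-A] holds; and if `C` is saturated, [M1-A] holds iff
`Max(C:A) ⊆ C*`, in which case `⟨Max(C:A)⟩ ⊆ C*` as well. -/
theorem stmt12 {α : Type*} [Fintype α] [DecidableEq α] (hcard : 2 ≤ Fintype.card α)
    (C : Set (Finset α)) (hC : IsCS C) (hW : IsWeakPW C)
    (A : Finset α) (hA : A ∈ C) (h2 : (MaxBelowS C A).Nontrivial) :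
    Xor' (∀ B ∈ C, B ⊆ A → ∀ M ∈ MaxBelowS C A, Compatible B M)
         (∀ M ∈ MaxBelowS C A, ∀ M' ∈ MaxBelowS C A, M ≠ M' →
            M ∩ M' ≠ ∅ ∧ M ∪ M' = A) ∧
    (IsSatPW C →
      ((∀ B ∈ C, B ⊆ A → ∀ M ∈ MaxBelowS C A, Compatible B M) ↔
          MaxBelowS C A ⊆ adjS C) ∧
      ((∀ B ∈ C, B ⊆ A → ∀ M ∈ MaxBelowS C A, Compatible B M) →
        ∀ M : Finset (Finset α), (↑M : Set (Finset α)) ⊆ MaxBelowS C A →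
          M.Nonempty → (↑M : Set (Finset α)) ≠ MaxBelowS C A →
          M.sup id ∈ adjS C)) := by
  obtain ⟨N₀, hN₀, N₁, hN₁, hN01⟩ := h2
  constructor
  · -- Xor part
    by_cases hM1 : ∀ B ∈ C, B ⊆ A → ∀ M ∈ MaxBelowS C A, Compatible B M
    · refine Or.inl ⟨hM1, ?_⟩
      intro hM2
      have hc := hM1 N₀ hN₀.1 hN₀.2.1 N₁ hN₁
      have hd := max_compat_disjoint hN₀ hN₁ hN01 hc
      exact (hM2 N₀ hN₀ N₁ hN₁ hN01).1 hd
    · refine Or.inr ⟨?_, hM1⟩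
      push_neg at hM1
      obtain ⟨B, hB, hBA, M, hM, hinc⟩ := hM1
      have hincd := hinc
      simp only [Compatible, not_or] at hincd
      obtain ⟨hi1, hi2, hi3⟩ := hincd
      have hBneA : B ≠ A := by
        rintro rfl
        exact hi3 (Finset.inter_eq_right.mpr hM.2.1)
      obtain ⟨M₁, hM₁m, hBM₁⟩ := exists_max hB hBA hBneA
      have hincM : ¬Compatible M₁ M := by
        rintro (h | h | h)
        · apply hi1
          have hs : B ∩ M ⊆ M₁ ∩ M := Finset.inter_subset_inter hBM₁ subset_rfl
          rw [h] at hs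
          exact Finset.subset_empty.mp hs
        · exact hi2 (Finset.inter_eq_left.mpr (hBM₁.trans (Finset.inter_eq_left.mp h)))
        · have hMM₁ : M ⊆ M₁ := Finset.inter_eq_right.mp h
          have : M = M₁ := hM.2.2.2 M₁ hM₁m.1 hM₁m.2.1 hM₁m.2.2.1 hMM₁
          apply hi2
          apply Finset.inter_eq_left.mpr
          rw [this] at *
          exact hBM₁
      exact M2_of_incompat hC hW hM₁m hM hincM
  · -- saturated part
    intro hSat
    constructor
    · constructor
      · exact fun hM1 => M1_to_adj hC hSat hA hM1
      · intro hadj B hB hBA M hM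
        exact compat_symm ((hadj hM).2 B hB)
    · intro hM1 M hMsub hMne hMproper
      have hadj := M1_to_adj hC hSat hA hM1
      obtain ⟨P₀, hP₀⟩ := hMne
      have hP₀max := hMsub hP₀
      refine ⟨?_, ?_⟩
      · obtain ⟨x, hx⟩ := hC P₀ hP₀max.1
        exact ⟨x, Finset.mem_sup.mpr ⟨P₀, hP₀, hx⟩⟩
      intro B hB
      have hUA : M.sup id ⊆ A :=
        Finset.sup_le fun P hP => (hMsub hP).2.1
      by_cases hcase1 : ∃ N ∈ M, B ⊆ N
      · -- B ⊆ U
        obtain ⟨N, hN, hBN⟩ := hcase1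
        right; right
        apply Finset.inter_eq_right.mpr
        exact hBN.trans (Finset.le_sup (f := id) hN)
      · push_neg at hcase1
        by_cases hcase2 : ∀ N ∈ M, N ∩ B = ∅
        · -- disjoint
          left
          apply Finset.eq_empty_iff_forall_notMem.mpr
          intro x hx
          obtain ⟨hxU, hxB⟩ := Finset.mem_inter.mp hx
          obtain ⟨N, hN, hxN⟩ := Finset.mem_sup.mp hxU
          have : x ∈ N ∩ B := Finset.mem_inter.mpr ⟨hxN, hxB⟩
          rw [hcase2 N hN] at this
          exact absurd this (Finset.notMem_empty x)
        · push_neg at hcase2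
          obtain ⟨N₂, hN₂, hN₂B⟩ := hcase2
          have hN₂max := hMsub hN₂
          -- Compatible N₂ B since N₂ ∈ adjS
          have hcN₂ := (hadj hN₂max).2 B hB
          have hN₂sub : N₂ ⊆ B := by
            rcases hcN₂ with h | h | h
            · exact absurd h (Finset.nonempty_iff_ne_empty.mp hN₂B)
            · exact Finset.inter_eq_left.mp h
            · exact absurd (Finset.inter_eq_right.mp h) (hcase1 N₂ hN₂)
          -- show U ⊆ B in all remaining cases
          have hUB : M.sup id ⊆ B := by
            by_cases hBA : B ⊆ A
            · by_cases hBeqA : B = A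
              · rw [hBeqA]; exact hUA
              · exfalso
                obtain ⟨N', hN'max, hBN'⟩ := exists_max hB hBA hBeqA
                have : N₂ = N' := hN₂max.2.2.2 N' hN'max.1 hN'max.2.1 hN'max.2.2.1
                  (hN₂sub.trans hBN')
                exact hcase1 N₂ hN₂ (this ▸ hBN')
            · by_cases hAB : A ⊆ B
              · exact hUA.trans hAB
              · -- A incompatible B
                have hN₂ne : N₂.Nonempty := hC N₂ hN₂max.1
                have hABi : A ∩ B ≠ ∅ := by
                  obtain ⟨x, hx⟩ := hN₂ne
                  apply Finset.ne_empty_of_mem (a := x)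
                  exact Finset.mem_inter.mpr ⟨hN₂max.2.1 hx, hN₂sub hx⟩
                have hABinc : ¬Compatible A B := by
                  rintro (h | h | h)
                  · exact hABi h
                  · exact hAB (Finset.inter_eq_left.mp h)
                  · exact hBA (Finset.inter_eq_right.mp h)
                obtain ⟨hIC, -, hDC, -, -⟩ := hSat A hA B hB hABinc
                have hIneA : A ∩ B ≠ A := fun h => hAB (Finset.inter_eq_left.mp h)
                have hN₂I : N₂ ⊆ A ∩ B := Finset.subset_inter hN₂max.2.1 hN₂sub
                have hN₂eq : N₂ = A ∩ B :=
                  hN₂max.2.2.2 (A ∩ B) hIC Finset.inter_subset_left hIneA hN₂I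
                -- A \ B facts
                have hDneA : A \ B ≠ A := by
                  intro h
                  obtain ⟨x, hx⟩ := hN₂ne
                  have hxI : x ∈ A ∩ B := hN₂I hx
                  obtain ⟨hxA, hxB⟩ := Finset.mem_inter.mp hxI
                  have : x ∈ A \ B := h.symm ▸ hxA
                  exact (Finset.mem_sdiff.mp this).2 hxB
                -- every maximal ≠ N₂ equals A \ B
                have hother : ∀ P ∈ MaxBelowS C A, P ≠ N₂ → P = A \ B := by
                  intro P hP hPne
                  have hcomp : Compatible P N₂ := hM1 P hP.1 hP.2.1 N₂ hN₂max
                  have hd := max_compat_disjoint hP hN₂max hPne hcomp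
                  have hPsub : P ⊆ A \ B := by
                    intro x hx
                    apply Finset.mem_sdiff.mpr
                    refine ⟨hP.2.1 hx, ?_⟩
                    intro hxB
                    have hxI : x ∈ A ∩ B := Finset.mem_inter.mpr ⟨hP.2.1 hx, hxB⟩
                    rw [← hN₂eq] at hxI
                    have : x ∈ P ∩ N₂ := Finset.mem_inter.mpr ⟨hx, hxI⟩
                    rw [hd] at this
                    exact absurd this (Finset.notMem_empty x)
                  exact hP.2.2.2 (A \ B) hDC Finset.sdiff_subset hDneA hPsub
                -- all members of M equal N₂
                have hall : ∀ P ∈ M, P = N₂ := by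
                  intro P hP
                  by_contra hPne
                  have hPeq : P = A \ B := hother P (hMsub hP) hPne
                  apply hMproper
                  apply Set.Subset.antisymm hMsub
                  intro Q hQ
                  by_cases hQn : Q = N₂
                  · rw [hQn]; exact hN₂
                  · have : Q = A \ B := hother Q hQ hQn
                    rw [this, ← hPeq]; exact hP
                have hUeq : M.sup id = N₂ := by
                  apply Finset.Subset.antisymm
                  · exact Finset.sup_le fun P hP => le_of_eq (hall P hP)
                  · exact Finset.le_sup (f := id) hN₂
                rw [hUeq]
                exact hN₂sub
          right; left
          exact Finset.inter_eq_left.mpr hUB
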